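/- In the field ℚ(x_1,x_2) of rational functions in two variables over ℚ, the following identity holds: (x_1 − x_2)·1/((1−x_1^2)^2(1−x_1x_2)^2(1−x_2^2)^2) = x_1·h(x_1, x_1x_2) − x_2·h(x_2, x_1x_2), where h(v_1,v_2) = (1 + v_1^2v_2)/((1−v_1^2)^2(1−v_2^2)^3). (This expresses that h is the multiplicity series M' of the Hilbert series of the symmetric algebra K[W(2)⊕W(2)] of the GL_2-module W(2)⊕W(2).) -/

import Mathlib

/-- The candidate multiplicity series `M'(H(K[W(2)⊕W(2)]); v₁, v₂)`. -/
noncomputable def multSeriesW2W2 (v1 v2 : FractionRing (MvPolynomial (Fin 2) ℚ)) :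
    FractionRing (MvPolynomial (Fin 2) ℚ) :=
  (1 + v1 ^ 2 * v2) / ((1 - v1 ^ 2) ^ 2 * (1 - v2 ^ 2) ^ 3)

lemma aux_ne_zero (p : MvPolynomial (Fin 2) ℚ)
    (h : MvPolynomial.eval (fun _ => (0:ℚ)) p ≠ 0) :
    algebraMap (MvPolynomial (Fin 2) ℚ) (FractionRing (MvPolynomial (Fin 2) ℚ)) p ≠ 0 := by
  intro hp
  apply h
  have hp0 : p = 0 :=
    IsFractionRing.injective (MvPolynomial (Fin 2) ℚ)
      (FractionRing (MvPolynomial (Fin 2) ℚ)) (by simpa using hp)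
  simp [hp0]

/-- In `ℚ(x₁,x₂)` one has
`(x₁ − x₂)/((1−x₁²)²(1−x₁x₂)²(1−x₂²)²) = x₁·h(x₁,x₁x₂) − x₂·h(x₂,x₁x₂)`
with `h(v₁,v₂) = (1 + v₁²v₂)/((1−v₁²)²(1−v₂²)³)`, i.e. `h` is the multiplicity
series of the Hilbert series of the symmetric algebra `K[W(2)⊕W(2)]`. -/
theorem multiplicity_series_KW2W2
    (x1 x2 : FractionRing (MvPolynomial (Fin 2) ℚ))
    (hx1 : x1 = algebraMap (MvPolynomial (Fin 2) ℚ) _ (MvPolynomial.X 0))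
    (hx2 : x2 = algebraMap (MvPolynomial (Fin 2) ℚ) _ (MvPolynomial.X 1)) :
    (x1 - x2) *
        (1 / ((1 - x1 ^ 2) ^ 2 * (1 - x1 * x2) ^ 2 * (1 - x2 ^ 2) ^ 2)) =
      x1 * multSeriesW2W2 x1 (x1 * x2) - x2 * multSeriesW2W2 x2 (x1 * x2) := by
  have h1 : (1 : FractionRing (MvPolynomial (Fin 2) ℚ)) - x1 ^ 2 ≠ 0 := by
    have : (1 : FractionRing (MvPolynomial (Fin 2) ℚ)) - x1 ^ 2 =
        algebraMap (MvPolynomial (Fin 2) ℚ) _ (1 - MvPolynomial.X 0 ^ 2) := by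
      simp [hx1, map_sub, map_pow]
    rw [this]
    exact aux_ne_zero _ (by simp)
  have h2 : (1 : FractionRing (MvPolynomial (Fin 2) ℚ)) - x2 ^ 2 ≠ 0 := by
    have : (1 : FractionRing (MvPolynomial (Fin 2) ℚ)) - x2 ^ 2 =
        algebraMap (MvPolynomial (Fin 2) ℚ) _ (1 - MvPolynomial.X 1 ^ 2) := by
      simp [hx2, map_sub, map_pow]
    rw [this]
    exact aux_ne_zero _ (by simp)
  have h3 : (1 : FractionRing (MvPolynomial (Fin 2) ℚ)) - x1 * x2 ≠ 0 := by
    have : (1 : FractionRing (MvPolynomial (Fin 2) ℚ)) - x1 * x2 =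
        algebraMap (MvPolynomial (Fin 2) ℚ) _ (1 - MvPolynomial.X 0 * MvPolynomial.X 1) := by
      simp [hx1, hx2, map_sub, map_mul]
    rw [this]
    exact aux_ne_zero _ (by simp)
  have h4 : (1 : FractionRing (MvPolynomial (Fin 2) ℚ)) - (x1 * x2) ^ 2 ≠ 0 := by
    have : (1 : FractionRing (MvPolynomial (Fin 2) ℚ)) - (x1 * x2) ^ 2 =
        algebraMap (MvPolynomial (Fin 2) ℚ) _
          (1 - (MvPolynomial.X 0 * MvPolynomial.X 1) ^ 2) := by
      simp [hx1, hx2, map_sub, map_mul, map_pow]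
    rw [this]
    exact aux_ne_zero _ (by simp)
  have h4' : (1 : FractionRing (MvPolynomial (Fin 2) ℚ)) - x1 ^ 2 * x2 ^ 2 ≠ 0 := by
    rwa [mul_pow] at h4
  unfold multSeriesW2W2
  field_simp
  ring
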